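/- arXiv:1602.07485 — 3 statements merged into one kernel-verified Lean document; each statement's English description precedes it below -/
import Mathlib

section
/- Let α ∈ (0,1), β > 0, and let W : ℝ → [0,∞) be nondecreasing with W(u) = 0 for u ≤ 0. Suppose there is M < ∞ such that W(x) − W(y) ≤ M (x−y)^α |log(x−y)|^{1−α} whenever −∞ < y < x ≤ 1/2. Then for 0 ≤ v < u ≤ 1/2, with I(u,v) := ∫_{[0,v]} ((u−y)^β − (v−y)^β) dW(y), one has 0 ≤ ∫_{[0,u]}(u−y)^β dW(y) − ∫_{[0,v]}(v−y)^β dW(y) ≤ I(u,v) + M (u−v)^{α+β} |log(u−v)|^{1−α}. -/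
open Set MeasureTheory

/-- Decomposition estimate for the increment of `u ↦ ∫_{[0,u]}(u-y)^β dW(y)` when
`W` is nondecreasing, vanishes on `(-∞,0]`, and has the modulus of continuity
`W(x)-W(y) ≤ M(x-y)^α |log(x-y)|^{1-α}` for `y < x ≤ 1/2`. -/
theorem stmt6 (α β M : ℝ) (hα : α ∈ Set.Ioo (0:ℝ) 1) (hβ : 0 < β)
    (W : StieltjesFunction ℝ) (hW0 : ∀ u : ℝ, u ≤ 0 → W u = 0)
    (hM : ∀ y x : ℝ, y < x → x ≤ 1 / 2 →
      W x - W y ≤ M * (x - y) ^ α * |Real.log (x - y)| ^ (1 - α))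
    (u v : ℝ) (hv : 0 ≤ v) (hvu : v < u) (hu : u ≤ 1 / 2) :
    0 ≤ (∫ y in Set.Icc 0 u, (u - y) ^ β ∂W.measure) -
        ∫ y in Set.Icc 0 v, (v - y) ^ β ∂W.measure ∧
    (∫ y in Set.Icc 0 u, (u - y) ^ β ∂W.measure) -
        ∫ y in Set.Icc 0 v, (v - y) ^ β ∂W.measure ≤
      (∫ y in Set.Icc 0 v, ((u - y) ^ β - (v - y) ^ β) ∂W.measure) +
        M * (u - v) ^ (α + β) * |Real.log (u - v)| ^ (1 - α) := by
  have hvu' : v ≤ u := hvu.le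
  have hu0 : (0:ℝ) ≤ u := hv.trans hvu'
  -- continuity of the integrands
  have hcu : Continuous (fun y : ℝ => (u - y) ^ β) :=
    (continuous_const.sub continuous_id).rpow_const (fun x => Or.inr hβ.le)
  have hcv : Continuous (fun y : ℝ => (v - y) ^ β) :=
    (continuous_const.sub continuous_id).rpow_const (fun x => Or.inr hβ.le)
  -- integrability
  have hIu : IntegrableOn (fun y : ℝ => (u - y) ^ β) (Icc 0 u) W.measure :=
    hcu.integrableOn_Icc
  have hIuv : IntegrableOn (fun y : ℝ => (u - y) ^ β) (Icc 0 v) W.measure :=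
    hcu.integrableOn_Icc
  have hIuo : IntegrableOn (fun y : ℝ => (u - y) ^ β) (Ioc v u) W.measure :=
    hcu.integrableOn_Ioc
  have hIv : IntegrableOn (fun y : ℝ => (v - y) ^ β) (Icc 0 v) W.measure :=
    hcv.integrableOn_Icc
  -- decompose the integral over [0,u]
  have hsplit : (∫ y in Set.Icc 0 u, (u - y) ^ β ∂W.measure)
      = (∫ y in Set.Icc 0 v, (u - y) ^ β ∂W.measure)
        + ∫ y in Set.Ioc v u, (u - y) ^ β ∂W.measure := by
    rw [← Set.Icc_union_Ioc_eq_Icc hv hvu']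
    exact setIntegral_union ((Set.Iic_disjoint_Ioc le_rfl).mono Set.Icc_subset_Iic_self le_rfl) measurableSet_Ioc hIuv hIuo
  have hdiff : (∫ y in Set.Icc 0 v, (u - y) ^ β ∂W.measure)
      - (∫ y in Set.Icc 0 v, (v - y) ^ β ∂W.measure)
      = ∫ y in Set.Icc 0 v, ((u - y) ^ β - (v - y) ^ β) ∂W.measure :=
    (integral_sub hIuv hIv).symm
  have key : (∫ y in Set.Icc 0 u, (u - y) ^ β ∂W.measure) -
      ∫ y in Set.Icc 0 v, (v - y) ^ β ∂W.measure
      = (∫ y in Set.Icc 0 v, ((u - y) ^ β - (v - y) ^ β) ∂W.measure)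
        + ∫ y in Set.Ioc v u, (u - y) ^ β ∂W.measure := by
    rw [hsplit, ← hdiff]; ring
  -- nonnegativity of the two pieces
  have h1 : 0 ≤ ∫ y in Set.Icc 0 v, ((u - y) ^ β - (v - y) ^ β) ∂W.measure := by
    apply setIntegral_nonneg measurableSet_Icc
    intro y hy
    have h0 : (0:ℝ) ≤ v - y := by linarith [hy.2]
    have := Real.rpow_le_rpow h0 (by linarith : v - y ≤ u - y) hβ.le
    linarith
  have h2 : 0 ≤ ∫ y in Set.Ioc v u, (u - y) ^ β ∂W.measure := by
    apply setIntegral_nonneg measurableSet_Ioc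
    intro y hy
    exact Real.rpow_nonneg (by linarith [hy.2]) β
  constructor
  · rw [key]; linarith
  · rw [key]
    have h3 : (∫ y in Set.Ioc v u, (u - y) ^ β ∂W.measure)
        ≤ M * (u - v) ^ (α + β) * |Real.log (u - v)| ^ (1 - α) := by
      have hbd : (∫ y in Set.Ioc v u, (u - y) ^ β ∂W.measure)
          ≤ ∫ _y in Set.Ioc v u, (u - v) ^ β ∂W.measure := by
        apply setIntegral_mono_on hIuo (integrableOn_const ?_)
          measurableSet_Ioc
        · intro y hy
          exact Real.rpow_le_rpow (by linarith [hy.2]) (by linarith [hy.1]) hβ.le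
        · rw [W.measure_Ioc]
          exact ENNReal.ofReal_ne_top
      have hconst : (∫ _y in Set.Ioc v u, (u - v) ^ β ∂W.measure)
          = (W u - W v) * (u - v) ^ β := by
        rw [setIntegral_const, measureReal_def, W.measure_Ioc, smul_eq_mul,
          ENNReal.toReal_ofReal (by linarith [W.mono hvu'] : (0:ℝ) ≤ W u - W v)]
      have hWuv : W u - W v ≤ M * (u - v) ^ α * |Real.log (u - v)| ^ (1 - α) :=
        hM v u hvu hu
      have hrp : (0:ℝ) ≤ (u - v) ^ β := Real.rpow_nonneg (by linarith) β
      calc (∫ y in Set.Ioc v u, (u - y) ^ β ∂W.measure)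
          ≤ (W u - W v) * (u - v) ^ β := by rw [← hconst]; exact hbd
        _ ≤ (M * (u - v) ^ α * |Real.log (u - v)| ^ (1 - α)) * (u - v) ^ β :=
            mul_le_mul_of_nonneg_right hWuv hrp
        _ = M * (u - v) ^ (α + β) * |Real.log (u - v)| ^ (1 - α) := by
            rw [Real.rpow_add (by linarith : (0:ℝ) < u - v)]; ring
    linarith
end

section
/- Let ξ be a positive random variable with P(ξ > t) ∼ t^{−α} ℓ(t) as t → ∞ for some α ∈ (0,1) and slowly varying ℓ, let S_0 = 0, S_n = ξ_1 + ⋯ + ξ_n with ξ_i i.i.d. copies of ξ, and ν(t) = inf{k ≥ 0 : S_k > t}. Then for every λ > 0, sup_{t≥0} E exp(λ·P(ξ > t)·ν(t)) < ∞. -/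
open Filter MeasureTheory ProbabilityTheory Finset
open scoped ENNReal

section helpers

variable {Ω : Type*} [MeasurableSpace Ω] {P : Measure Ω} [IsProbabilityMeasure P]

lemma aux_integrable_exp (X : Ω → ℝ) (hX : Measurable X) (hpos : ∀ ω, 0 ≤ X ω)
    (s : ℝ) (hs : 0 ≤ s) : Integrable (fun ω => Real.exp (-s * X ω)) P := by
  refine Integrable.mono' (integrable_const 1) ((hX.const_mul (-s)).exp).aestronglyMeasurable ?_
  refine Filter.Eventually.of_forall fun ω => ?_
  rw [Real.norm_eq_abs, abs_of_pos (Real.exp_pos _)]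
  have h : -s * X ω ≤ 0 := mul_nonpos_of_nonpos_of_nonneg (neg_nonpos.mpr hs) (hpos ω)
  calc Real.exp (-s * X ω) ≤ Real.exp 0 := Real.exp_le_exp.mpr h
    _ = 1 := Real.exp_zero

lemma aux_transform_le (X : Ω → ℝ) (hX : Measurable X) (hpos : ∀ ω, 0 ≤ X ω)
    (s : ℝ) (hs : 0 < s) :
    ∫ ω, Real.exp (-s * X ω) ∂P ≤
      Real.exp (-((1 - Real.exp (-1)) * (P {ω | s⁻¹ < X ω}).toReal)) := by
  set A := {ω | s⁻¹ < X ω} with hA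
  have hAm : MeasurableSet A := measurableSet_lt measurable_const hX
  set q := (P A).toReal with hq
  have hq0 : (0:ℝ) ≤ q := ENNReal.toReal_nonneg
  have hIind : Integrable (A.indicator (fun _ => (1:ℝ))) P :=
    (integrable_const (1:ℝ)).indicator hAm
  have step1 : ∫ ω, Real.exp (-s * X ω) ∂P ≤
      ∫ ω, (1 - (1 - Real.exp (-1)) * A.indicator (fun _ => (1:ℝ)) ω) ∂P := by
    refine integral_mono (aux_integrable_exp X hX hpos s hs.le)
      ((integrable_const (1:ℝ)).sub (hIind.const_mul _)) fun ω => ?_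
    by_cases hω : ω ∈ A
    · rw [Set.indicator_of_mem hω]
      have h1 : 1 < s * X ω := by
        have := hω
        rw [hA, Set.mem_setOf_eq] at this
        calc (1:ℝ) = s * s⁻¹ := by field_simp
          _ < s * X ω := by exact mul_lt_mul_of_pos_left this hs
      have : Real.exp (-s * X ω) ≤ Real.exp (-1) := by
        apply Real.exp_le_exp.mpr; nlinarith
      nlinarith
    · rw [Set.indicator_of_notMem hω]
      have h : -s * X ω ≤ 0 := mul_nonpos_of_nonpos_of_nonneg (neg_nonpos.mpr hs.le) (hpos ω)
      have := Real.exp_le_exp.mpr h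
      rw [Real.exp_zero] at this
      linarith
  have step2 : ∫ ω, (1 - (1 - Real.exp (-1)) * A.indicator (fun _ => (1:ℝ)) ω) ∂P
      = 1 - (1 - Real.exp (-1)) * q := by
    rw [integral_sub (integrable_const 1) (hIind.const_mul _), integral_const,
      probReal_univ, integral_const_mul, integral_indicator_const (1:ℝ) hAm]
    simp [hq, measureReal_def]
  have step3 : 1 - (1 - Real.exp (-1)) * q ≤
      Real.exp (-((1 - Real.exp (-1)) * q)) := by
    have := Real.add_one_le_exp (-((1 - Real.exp (-1)) * q))
    linarith
  linarith [step1, step2.le, step2.ge]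

lemma aux_chernoff (ξ : ℕ → Ω → ℝ) (hmeas : ∀ i, Measurable (ξ i))
    (hpos : ∀ i ω, 0 < ξ i ω)
    (hindep : iIndepFun ξ P)
    (hident : ∀ i, Measure.map (ξ i) P = Measure.map (ξ 0) P)
    (S : ℕ → Ω → ℝ) (hS : ∀ n ω, S n ω = ∑ i ∈ Finset.range n, ξ i ω)
    (s t : ℝ) (hs : 0 ≤ s) (n : ℕ) :
    P {ω | S n ω ≤ t} ≤
      ENNReal.ofReal (Real.exp (s * t) * (∫ ω, Real.exp (-s * ξ 0 ω) ∂P) ^ n) := by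
  have hSfun : S n = ∑ i ∈ Finset.range n, ξ i := by
    funext ω; rw [hS]; simp [Finset.sum_apply]
  have hSmeas : Measurable (S n) := by
    have h : S n = fun ω => ∑ i ∈ Finset.range n, ξ i ω := funext (hS n)
    rw [h]; exact Finset.measurable_sum _ fun i _ => hmeas i
  have hSnonneg : ∀ ω, 0 ≤ S n ω := fun ω => by
    rw [hS]; exact Finset.sum_nonneg fun i _ => (hpos i ω).le
  have hint : Integrable (fun ω => Real.exp (-s * S n ω)) P :=
    aux_integrable_exp _ hSmeas hSnonneg s hs
  have hcher := measure_le_le_exp_mul_mgf (μ := P) (X := S n) (t := -s) t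
    (neg_nonpos.mpr hs) hint
  have hmgf : mgf (S n) P (-s) = (∫ ω, Real.exp (-s * ξ 0 ω) ∂P) ^ n := by
    rw [hSfun, hindep.mgf_sum hmeas (Finset.range n)]
    have hone : ∀ i, mgf (ξ i) P (-s) = ∫ ω, Real.exp (-s * ξ 0 ω) ∂P := by
      intro i
      have hg : AEStronglyMeasurable (fun x : ℝ => Real.exp (-s * x))
          (Measure.map (ξ i) P) :=
        (Real.continuous_exp.comp (continuous_const.mul continuous_id)).aestronglyMeasurable
      have hg0 : AEStronglyMeasurable (fun x : ℝ => Real.exp (-s * x))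
          (Measure.map (ξ 0) P) :=
        (Real.continuous_exp.comp (continuous_const.mul continuous_id)).aestronglyMeasurable
      have h1 : mgf (ξ i) P (-s) = ∫ x, Real.exp (-s * x) ∂(Measure.map (ξ i) P) := by
        rw [mgf]
        exact (integral_map (hmeas i).aemeasurable hg).symm
      rw [h1, hident i, integral_map (hmeas 0).aemeasurable hg0]
    simp only [hone]
    rw [Finset.prod_const, Finset.card_range]
  rw [hmgf] at hcher
  have : P {ω | S n ω ≤ t} = ENNReal.ofReal ((P {ω | S n ω ≤ t}).toReal) :=
    (ENNReal.ofReal_toReal (measure_ne_top P _)).symm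
  rw [this]
  refine ENNReal.ofReal_le_ofReal ?_
  simpa [neg_neg, measureReal_def] using hcher

lemma aux_master (S : ℕ → Ω → ℝ) (hSmeas : ∀ n, Measurable (S n))
    (t : ℝ) (ν : Ω → ℕ) (hνS : ∀ ω n, n < ν ω → S n ω ≤ t)
    (c r K : ℝ) (hc : 0 < c) (hcr : 2 * c ≤ r)
    (htail : ∀ n : ℕ, P {ω | S n ω ≤ t} ≤
      ENNReal.ofReal (Real.exp K * Real.exp (-r) ^ n)) :
    ∫⁻ ω, ENNReal.ofReal (Real.exp (c * ν ω)) ∂P ≤ 1 + ENNReal.ofReal (Real.exp (K + c)) := by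
  set E : ℝ≥0∞ := ENNReal.ofReal (Real.exp c) with hE
  set f : ℕ → Ω → ℝ≥0∞ :=
    fun n ω => E ^ n * ({ω | S n ω ≤ t}).indicator (1 : Ω → ℝ≥0∞) ω with hf
  have hset : ∀ n : ℕ, MeasurableSet {ω | S n ω ≤ t} :=
    fun n => measurableSet_le (hSmeas n) measurable_const
  have hpt : ∀ ω, ENNReal.ofReal (Real.exp (c * ν ω)) ≤
      1 + ENNReal.ofReal (Real.exp c - 1) * ∑' n, f n ω := by
    intro ω
    set k := ν ω with hk
    have hgeom : Real.exp (c * k) =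
        1 + (Real.exp c - 1) * ∑ n ∈ Finset.range k, Real.exp c ^ n := by
      have h := geom_sum_mul (Real.exp c) k
      have h2 : Real.exp c ^ k = Real.exp (c * k) := by
        rw [mul_comm, Real.exp_nat_mul]
      nlinarith [h, h2]
    have hsum_nonneg : (0:ℝ) ≤ ∑ n ∈ Finset.range k, Real.exp c ^ n :=
      Finset.sum_nonneg fun n _ => pow_nonneg (Real.exp_nonneg c) n
    have hc1 : (0:ℝ) ≤ Real.exp c - 1 := by
      have := Real.one_le_exp hc.le; linarith
    calc ENNReal.ofReal (Real.exp (c * k))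
        = 1 + ENNReal.ofReal (Real.exp c - 1) *
            ENNReal.ofReal (∑ n ∈ Finset.range k, Real.exp c ^ n) := by
          rw [hgeom, ENNReal.ofReal_add zero_le_one (mul_nonneg hc1 hsum_nonneg),
            ENNReal.ofReal_one, ENNReal.ofReal_mul hc1]
      _ ≤ 1 + ENNReal.ofReal (Real.exp c - 1) * ∑' n, f n ω := by
          gcongr
          have h1 : ENNReal.ofReal (∑ n ∈ Finset.range k, Real.exp c ^ n)
              = ∑ n ∈ Finset.range k, f n ω := by
            rw [ENNReal.ofReal_sum_of_nonneg fun n _ => pow_nonneg (Real.exp_nonneg c) n]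
            refine Finset.sum_congr rfl fun n hn => ?_
            have hmem : ω ∈ {ω | S n ω ≤ t} := hνS ω n (Finset.mem_range.mp hn)
            rw [hf]
            simp only [Set.indicator_of_mem hmem, Pi.one_apply, mul_one]
            rw [hE, ENNReal.ofReal_pow (Real.exp_nonneg c)]
          rw [h1]
          exact ENNReal.sum_le_tsum _
  have hfmeas : ∀ n, Measurable (f n) :=
    fun n => (measurable_const.indicator (hset n)).const_mul _
  have hint : ∫⁻ ω, (1 + ENNReal.ofReal (Real.exp c - 1) * ∑' n, f n ω) ∂P
      = 1 + ENNReal.ofReal (Real.exp c - 1) * ∑' n, E ^ n * P {ω | S n ω ≤ t} := by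
    rw [lintegral_add_left measurable_const, lintegral_one, measure_univ,
      lintegral_const_mul' _ _ ENNReal.ofReal_ne_top,
      lintegral_tsum fun n => (hfmeas n).aemeasurable]
    congr 2
    refine tsum_congr fun n => ?_
    rw [hf]
    rw [lintegral_const_mul' _ _ (by
      rw [hE, ← ENNReal.ofReal_pow (Real.exp_nonneg c)]; exact ENNReal.ofReal_ne_top)]
    rw [lintegral_indicator_one (hset n)]
  have hgsum : ∑' n, E ^ n * P {ω | S n ω ≤ t} ≤
      ENNReal.ofReal (Real.exp K) * (1 - ENNReal.ofReal (Real.exp (-c)))⁻¹ := by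
    calc ∑' n, E ^ n * P {ω | S n ω ≤ t}
        ≤ ∑' n : ℕ, ENNReal.ofReal (Real.exp K) * ENNReal.ofReal (Real.exp (-c)) ^ n := by
          refine ENNReal.tsum_le_tsum fun n => ?_
          calc E ^ n * P {ω | S n ω ≤ t}
              ≤ E ^ n * ENNReal.ofReal (Real.exp K * Real.exp (-r) ^ n) :=
                mul_le_mul_right (htail n) _
            _ = ENNReal.ofReal (Real.exp K) *
                  ENNReal.ofReal (Real.exp c * Real.exp (-r)) ^ n := by
                rw [ENNReal.ofReal_mul (Real.exp_nonneg K),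
                  ENNReal.ofReal_pow (Real.exp_nonneg _), hE,
                  ENNReal.ofReal_mul (Real.exp_nonneg c), mul_pow]
                ring
            _ ≤ ENNReal.ofReal (Real.exp K) * ENNReal.ofReal (Real.exp (-c)) ^ n := by
                gcongr
                rw [← Real.exp_add]
                exact Real.exp_le_exp.mpr (by linarith)
      _ = ENNReal.ofReal (Real.exp K) * (1 - ENNReal.ofReal (Real.exp (-c)))⁻¹ := by
          rw [ENNReal.tsum_mul_left, ENNReal.tsum_geometric]
  have hfinal : ENNReal.ofReal (Real.exp c - 1) *
      (ENNReal.ofReal (Real.exp K) * (1 - ENNReal.ofReal (Real.exp (-c)))⁻¹)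
      = ENNReal.ofReal (Real.exp (K + c)) := by
    have h2 : (0:ℝ) < 1 - Real.exp (-c) := by
      have : Real.exp (-c) < 1 := Real.exp_lt_one_iff.mpr (by linarith)
      linarith
    have h1 : (1:ℝ≥0∞) - ENNReal.ofReal (Real.exp (-c)) = ENNReal.ofReal (1 - Real.exp (-c)) := by
      rw [← ENNReal.ofReal_one, ← ENNReal.ofReal_sub _ (Real.exp_nonneg _)]
    rw [h1, ← ENNReal.ofReal_inv_of_pos h2, ← ENNReal.ofReal_mul (Real.exp_nonneg K),
      ← ENNReal.ofReal_mul (by have := Real.one_le_exp hc.le; linarith)]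
    congr 1
    have hne : 1 - Real.exp (-c) ≠ 0 := ne_of_gt h2
    rw [Real.exp_add]
    field_simp
    rw [Real.exp_neg]
    field_simp
  calc ∫⁻ ω, ENNReal.ofReal (Real.exp (c * ν ω)) ∂P
      ≤ ∫⁻ ω, (1 + ENNReal.ofReal (Real.exp c - 1) * ∑' n, f n ω) ∂P := lintegral_mono hpt
    _ = 1 + ENNReal.ofReal (Real.exp c - 1) * ∑' n, E ^ n * P {ω | S n ω ≤ t} := hint
    _ ≤ 1 + ENNReal.ofReal (Real.exp c - 1) *
          (ENNReal.ofReal (Real.exp K) * (1 - ENNReal.ofReal (Real.exp (-c)))⁻¹) := by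
        gcongr
    _ = 1 + ENNReal.ofReal (Real.exp (K + c)) := by rw [hfinal]

end helpers

set_option maxHeartbeats 1000000 in
/-- Uniform exponential-moment bound for normalized first-passage times of a
random walk with heavy-tailed steps: if `P(ξ > t) ∼ t^{-α} ℓ(t)` with
`α ∈ (0,1)` and `ℓ` slowly varying, then
`sup_{t ≥ 0} E exp(λ P(ξ > t) ν(t)) < ∞` for every `λ > 0`. -/
theorem stmt14 {Ω : Type*} [MeasurableSpace Ω] (P : Measure Ω) [IsProbabilityMeasure P]
    (α : ℝ) (hα : α ∈ Set.Ioo (0:ℝ) 1)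
    (ℓ : ℝ → ℝ) (hℓpos : ∀ t, 0 < t → 0 < ℓ t)
    (hℓsv : ∀ l : ℝ, 0 < l → Tendsto (fun t => ℓ (l * t) / ℓ t) atTop (nhds 1))
    (ξ : ℕ → Ω → ℝ) (hmeas : ∀ i, Measurable (ξ i))
    (hpos : ∀ i ω, 0 < ξ i ω)
    (hindep : iIndepFun ξ P)
    (hident : ∀ i, Measure.map (ξ i) P = Measure.map (ξ 0) P)
    (a : ℝ → ℝ) (ha : ∀ t, a t = (P {ω | t < ξ 0 ω}).toReal)
    (htail : Tendsto (fun t => a t / (t ^ (-α) * ℓ t)) atTop (nhds 1))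
    (S : ℕ → Ω → ℝ) (hS : ∀ n ω, S n ω = ∑ i ∈ Finset.range n, ξ i ω)
    (ν : ℝ → Ω → ℕ) (hν : ∀ t ω, ν t ω = sInf {k : ℕ | t < S k ω}) :
    ∀ lam : ℝ, 0 < lam → ∃ B : ℝ≥0∞, B < ⊤ ∧ ∀ t : ℝ, 0 ≤ t →
      ∫⁻ ω, ENNReal.ofReal (Real.exp (lam * a t * (ν t ω : ℝ))) ∂P ≤ B := by
  intro lam hlam
  have hα0 := hα.1
  -- basic facts
  have hSmeas : ∀ n, Measurable (S n) := by
    intro n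
    have h : S n = fun ω => ∑ i ∈ Finset.range n, ξ i ω := funext (hS n)
    rw [h]; exact Finset.measurable_sum _ fun i _ => hmeas i
  have ha_nonneg : ∀ t, 0 ≤ a t := fun t => by rw [ha]; exact ENNReal.toReal_nonneg
  have ha_le_one : ∀ t, a t ≤ 1 := by
    intro t
    rw [ha]
    calc (P {ω | t < ξ 0 ω}).toReal ≤ (P Set.univ).toReal :=
      ENNReal.toReal_mono (measure_ne_top _ _) (measure_mono (Set.subset_univ _))
    _ = 1 := by rw [measure_univ]; simp
  have hνS : ∀ t ω n, n < ν t ω → S n ω ≤ t := by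
    intro t ω n hn
    by_contra hcon
    push_neg at hcon
    have h1 : ν t ω ≤ n := by
      rw [hν]; exact Nat.sInf_le hcon
    omega
  have hφ_nonneg : ∀ s : ℝ, 0 ≤ ∫ ω, Real.exp (-s * ξ 0 ω) ∂P :=
    fun s => integral_nonneg fun ω => Real.exp_nonneg _
  -- choice of s0 for the bounded-t regime
  have hφtend : Tendsto (fun n : ℕ => ∫ ω, Real.exp (-(n:ℝ) * ξ 0 ω) ∂P) atTop (nhds 0) := by
    have h0 : (nhds (0:ℝ)) = nhds (∫ ω, (0:ℝ) ∂P) := by simp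
    rw [h0]
    refine tendsto_integral_of_dominated_convergence (fun _ => (1:ℝ))
      (fun n => ((hmeas 0).const_mul _).exp.aestronglyMeasurable)
      (integrable_const 1)
      (fun n => Eventually.of_forall fun ω => ?_)
      (Eventually.of_forall fun ω => ?_)
    · rw [Real.norm_eq_abs, abs_of_pos (Real.exp_pos _)]
      have h : -(n:ℝ) * ξ 0 ω ≤ 0 :=
        mul_nonpos_of_nonpos_of_nonneg (neg_nonpos.mpr (Nat.cast_nonneg n)) (hpos 0 ω).le
      calc Real.exp (-(n:ℝ) * ξ 0 ω) ≤ Real.exp 0 := Real.exp_le_exp.mpr h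
        _ = 1 := Real.exp_zero
    · have h1 : Real.exp (-(ξ 0 ω)) < 1 :=
        Real.exp_lt_one_iff.mpr (neg_lt_zero.mpr (hpos 0 ω))
      have heq : (fun n : ℕ => Real.exp (-(n:ℝ) * ξ 0 ω))
          = fun n : ℕ => Real.exp (-(ξ 0 ω)) ^ n := by
        funext n
        rw [show -(n:ℝ) * ξ 0 ω = (n:ℝ) * (-(ξ 0 ω)) by ring, Real.exp_nat_mul]
      rw [heq]
      exact tendsto_pow_atTop_nhds_zero_of_lt_one (Real.exp_nonneg _) h1
  obtain ⟨n0, hn0φ, hn0ge⟩ :=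
    ((hφtend.eventually_le_const (Real.exp_pos (-(2*lam)))).and (eventually_ge_atTop 1)).exists
  set s0 : ℝ := (n0 : ℝ) with hs0
  have hs0pos : 0 < s0 := by
    rw [hs0]; exact_mod_cast Nat.lt_of_lt_of_le Nat.zero_lt_one hn0ge
  -- choice of θ
  set e1 : ℝ := 1 - Real.exp (-1) with he1def
  have he1 : 0 < e1 := by
    have : Real.exp (-1) < 1 := Real.exp_lt_one_iff.mpr (by norm_num)
    rw [he1def]; linarith
  obtain ⟨θ, hθα, hθ1⟩ :=
    (((tendsto_rpow_atTop hα0).eventually_ge_atTop (16*lam/e1)).and (eventually_ge_atTop 1)).exists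
  have hθpos : (0:ℝ) < θ := lt_of_lt_of_le one_pos hθ1
  -- eventual regular-variation inequalities
  have hcomp : Tendsto (fun t : ℝ => θ⁻¹ * t) atTop atTop :=
    Tendsto.const_mul_atTop (inv_pos.mpr hθpos) tendsto_id
  have E1 : ∀ᶠ t in atTop, a t / (t ^ (-α) * ℓ t) ≤ 2 :=
    htail.eventually_le_const (by norm_num)
  have E2 : ∀ᶠ t in atTop, 1/2 ≤ a t / (t ^ (-α) * ℓ t) :=
    htail.eventually_const_le (by norm_num)
  have E3 : ∀ᶠ t in atTop, 1/2 ≤ ℓ (θ⁻¹ * t) / ℓ t :=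
    (hℓsv θ⁻¹ (inv_pos.mpr hθpos)).eventually_const_le (by norm_num)
  have E4 : ∀ᶠ t in atTop,
      1/2 ≤ a (θ⁻¹ * t) / ((θ⁻¹ * t) ^ (-α) * ℓ (θ⁻¹ * t)) := hcomp.eventually E2
  obtain ⟨T, hT⟩ := eventually_atTop.mp ((E1.and E2).and (E3.and E4))
  set T' : ℝ := max T 1 with hT'
  -- key inequality in the tail regime
  have hkey : ∀ t, T' ≤ t → 2 * (lam * a t) ≤ e1 * a (θ⁻¹ * t) ∧ 0 < a t := by
    intro t ht
    have ht1 : (1:ℝ) ≤ t := le_trans (le_max_right T 1) ht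
    have htpos : (0:ℝ) < t := lt_of_lt_of_le one_pos ht1
    have hθt : (0:ℝ) < θ⁻¹ * t := mul_pos (inv_pos.mpr hθpos) htpos
    obtain ⟨⟨e1t, e2t⟩, e3t, e4t⟩ := hT t (le_trans (le_max_left T 1) ht)
    have hrpowt : (0:ℝ) < t ^ (-α) := Real.rpow_pos_of_pos htpos _
    have hℓt : (0:ℝ) < ℓ t := hℓpos t htpos
    have hℓθ : (0:ℝ) < ℓ (θ⁻¹ * t) := hℓpos _ hθt
    have hgt : (0:ℝ) < t ^ (-α) * ℓ t := mul_pos hrpowt hℓt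
    have hrpowθt : (0:ℝ) < (θ⁻¹ * t) ^ (-α) := Real.rpow_pos_of_pos hθt _
    have hgθ : (0:ℝ) < (θ⁻¹ * t) ^ (-α) * ℓ (θ⁻¹ * t) := mul_pos hrpowθt hℓθ
    have h1 : a t ≤ 2 * (t ^ (-α) * ℓ t) := by
      rw [div_le_iff₀ hgt] at e1t; linarith
    have h2 : (t ^ (-α) * ℓ t) / 2 ≤ a t := by
      rw [le_div_iff₀ hgt] at e2t; linarith
    have h3 : ℓ t / 2 ≤ ℓ (θ⁻¹ * t) := by
      rw [le_div_iff₀ hℓt] at e3t; linarith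
    have h4 : ((θ⁻¹ * t) ^ (-α) * ℓ (θ⁻¹ * t)) / 2 ≤ a (θ⁻¹ * t) := by
      rw [le_div_iff₀ hgθ] at e4t; linarith
    have hrpow_id : (θ⁻¹ * t) ^ (-α) = θ ^ α * t ^ (-α) := by
      rw [Real.mul_rpow (inv_nonneg.mpr hθpos.le) htpos.le,
        Real.inv_rpow hθpos.le, Real.rpow_neg hθpos.le, inv_inv]
    have hθα' : 16 * lam ≤ e1 * θ ^ α := by
      rw [div_le_iff₀ he1] at hθα; linarith
    have hapos : 0 < a t := lt_of_lt_of_le (by positivity) h2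
    refine ⟨?_, hapos⟩
    calc 2 * (lam * a t)
        ≤ 2 * (lam * (2 * (t ^ (-α) * ℓ t))) := by
          have := mul_le_mul_of_nonneg_left h1 (by positivity : (0:ℝ) ≤ 2 * lam)
          linarith
      _ = 4 * lam * (t ^ (-α) * ℓ t) := by ring
      _ ≤ 8 * lam * (t ^ (-α) * ℓ (θ⁻¹ * t)) := by
          have := mul_le_mul_of_nonneg_left h3
            (by positivity : (0:ℝ) ≤ 8 * lam * t ^ (-α))
          linarith
      _ ≤ (e1 * θ ^ α) * (t ^ (-α) * ℓ (θ⁻¹ * t)) / 2 := by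
          have h6 : (0:ℝ) ≤ t ^ (-α) * ℓ (θ⁻¹ * t) := by positivity
          have h7 := mul_le_mul_of_nonneg_right hθα' h6
          linarith
      _ = e1 * (θ ^ α * t ^ (-α) * ℓ (θ⁻¹ * t)) / 2 := by ring
      _ = e1 * ((θ⁻¹ * t) ^ (-α) * ℓ (θ⁻¹ * t)) / 2 := by rw [hrpow_id]
      _ ≤ e1 * a (θ⁻¹ * t) := by
          have := mul_le_mul_of_nonneg_left h4 he1.le
          linarith
  -- the uniform bound
  refine ⟨1 + ENNReal.ofReal (Real.exp (max (s0 * T') θ + lam)),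
    ENNReal.add_lt_top.mpr ⟨ENNReal.one_lt_top, ENNReal.ofReal_lt_top⟩, fun t ht => ?_⟩
  by_cases hat : a t = 0
  · have hz : ∀ ω, lam * a t * ((ν t ω : ℕ) : ℝ) = 0 := fun ω => by rw [hat]; ring
    simp only [hz, Real.exp_zero, ENNReal.ofReal_one, lintegral_one, measure_univ]
    exact le_self_add
  · have hatpos : 0 < a t := lt_of_le_of_ne (ha_nonneg t) (Ne.symm hat)
    have hc : 0 < lam * a t := mul_pos hlam hatpos
    have hc_le : lam * a t ≤ lam := by
      have := mul_le_mul_of_nonneg_left (ha_le_one t) hlam.le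
      linarith
    rcases le_total t T' with hcase | hcase
    · -- bounded regime
      have htail_n : ∀ n : ℕ, P {ω | S n ω ≤ t} ≤
          ENNReal.ofReal (Real.exp (s0 * T') * Real.exp (-(2*lam)) ^ n) := by
        intro n
        refine le_trans (aux_chernoff ξ hmeas hpos hindep hident S hS s0 t hs0pos.le n) ?_
        refine ENNReal.ofReal_le_ofReal ?_
        have hh1 : Real.exp (s0 * t) ≤ Real.exp (s0 * T') :=
          Real.exp_le_exp.mpr (mul_le_mul_of_nonneg_left hcase hs0pos.le)
        have hh2 : (∫ ω, Real.exp (-s0 * ξ 0 ω) ∂P) ^ n ≤ Real.exp (-(2*lam)) ^ n :=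
          pow_le_pow_left₀ (hφ_nonneg s0) hn0φ n
        exact mul_le_mul hh1 hh2 (pow_nonneg (hφ_nonneg s0) n) (Real.exp_nonneg _)
      have hm := aux_master (P := P) S hSmeas t (ν t) (hνS t)
        (lam * a t) (2*lam) (s0 * T') hc (by linarith) htail_n
      refine le_trans hm ?_
      gcongr
      exact le_max_left _ _
    · -- tail regime
      have ht1 : (1:ℝ) ≤ t := le_trans (le_max_right T 1) hcase
      have htpos : (0:ℝ) < t := lt_of_lt_of_le one_pos ht1
      have hθt : (0:ℝ) < θ⁻¹ * t := mul_pos (inv_pos.mpr hθpos) htpos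
      obtain ⟨hkey1, _⟩ := hkey t hcase
      set s : ℝ := (θ⁻¹ * t)⁻¹ with hsdef
      have hspos : 0 < s := inv_pos.mpr hθt
      have hst : s * t = θ := by
        rw [hsdef, mul_inv, inv_inv]
        field_simp
      have hsinv : s⁻¹ = θ⁻¹ * t := by rw [hsdef, inv_inv]
      have htr : ∫ ω, Real.exp (-s * ξ 0 ω) ∂P ≤ Real.exp (-(e1 * a (θ⁻¹ * t))) := by
        have := aux_transform_le (P := P) (ξ 0) (hmeas 0) (fun ω => (hpos 0 ω).le) s hspos
        rw [hsinv] at this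
        rw [he1def, ha]
        exact this
      have htail_n : ∀ n : ℕ, P {ω | S n ω ≤ t} ≤
          ENNReal.ofReal (Real.exp θ * Real.exp (-(e1 * a (θ⁻¹ * t))) ^ n) := by
        intro n
        refine le_trans (aux_chernoff ξ hmeas hpos hindep hident S hS s t hspos.le n) ?_
        refine ENNReal.ofReal_le_ofReal ?_
        rw [hst]
        exact mul_le_mul_of_nonneg_left
          (pow_le_pow_left₀ (hφ_nonneg s) htr n) (Real.exp_nonneg θ)
      have hm := aux_master (P := P) S hSmeas t (ν t) (hνS t)
        (lam * a t) (e1 * a (θ⁻¹ * t)) θ hc hkey1 htail_n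
      refine le_trans hm ?_
      gcongr
      exact le_max_right _ _
end

section
/- Let α ∈ (0,1), β ∈ ℝ, and let Y = (Y(u))_{u≥0} be defined by Y(u) = ∫_{[0,u]} (u−y)^β dW_α(y), where W_α is an inverse α-stable subordinator (which is self-similar of index α). Then Y is self-similar of index α+β: for every c > 0, the finite-dimensional distributions of (Y(cu))_{u≥0} coincide with those of (c^{α+β} Y(u))_{u≥0}. -/
open Filter MeasureTheory Set Function
open scoped ENNReal Topology

namespace Stmt16Aux


lemma measurable_rpow_const (p : ℝ) : Measurable fun x : ℝ => x ^ p :=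
  measurable_of_continuousOn_compl_singleton 0
    (continuousOn_id.rpow_const fun _ hx => Or.inl hx)

variable {f : StieltjesFunction ℝ}

lemma f_nonneg (h0 : ∀ x ≤ (0:ℝ), f x = 0) (x : ℝ) : 0 ≤ f x := by
  have h := f.mono (min_le_left x 0)
  rwa [h0 (min x 0) (min_le_right x 0)] at h

lemma leftLim_nonneg (h0 : ∀ x ≤ (0:ℝ), f x = 0) (x : ℝ) : 0 ≤ leftLim f x := by
  have h1 : f (min (x - 1) 0) ≤ leftLim f x :=
    f.mono.le_leftLim (lt_of_le_of_lt (min_le_left _ _) (by linarith))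
  rwa [h0 (min (x - 1) 0) (min_le_right _ _)] at h1

lemma leftLim_nonpos_eq (h0 : ∀ x ≤ (0:ℝ), f x = 0) {x : ℝ} (hx : x ≤ 0) :
    leftLim f x = 0 := by
  refine le_antisymm ?_ (leftLim_nonneg h0 x)
  have h := f.mono.leftLim_le (le_refl x)
  rwa [h0 x hx] at h

lemma repA (h0 : ∀ x ≤ (0:ℝ), f x = 0) {β : ℝ} (hβ : 0 < β) (u : ℝ) :
    ∫⁻ y in Icc 0 u, ENNReal.ofReal ((u - y) ^ β) ∂f.measure
      = ∫⁻ t in Ioi (0:ℝ), ENNReal.ofReal (leftLim f (u - t ^ β⁻¹)) := by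
  have hmf : Measurable fun y : ℝ => (u - y) ^ β :=
    (measurable_rpow_const β).comp (measurable_const.sub measurable_id)
  have hnn : 0 ≤ᵐ[f.measure.restrict (Icc 0 u)] fun y => (u - y) ^ β := by
    filter_upwards [ae_restrict_mem measurableSet_Icc] with y hy
    exact Real.rpow_nonneg (by linarith [hy.2]) β
  rw [lintegral_eq_lintegral_meas_lt _ hnn hmf.aemeasurable]
  refine setLIntegral_congr_fun measurableSet_Ioi (fun t ht => ?_)
  have ht' : (0:ℝ) < t := ht
  have hset : {a : ℝ | t < (u - a) ^ β} ∩ Icc 0 u = Ico 0 (u - t ^ β⁻¹) := by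
    ext y
    simp only [mem_inter_iff, mem_setOf_eq, mem_Icc, mem_Ico]
    constructor
    · rintro ⟨hty, hy0, hyu⟩
      refine ⟨hy0, ?_⟩
      have h2 : t ^ β⁻¹ < u - y :=
        (Real.rpow_inv_lt_iff_of_pos ht'.le (by linarith) hβ).mpr hty
      linarith
    · rintro ⟨hy0, hyx⟩
      have hs : 0 < t ^ β⁻¹ := Real.rpow_pos_of_pos ht' _
      exact ⟨(Real.rpow_inv_lt_iff_of_pos ht'.le (by linarith) hβ).mp (by linarith),
        hy0, by linarith⟩
  rw [Measure.restrict_apply (measurableSet_lt measurable_const hmf), hset,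
    f.measure_Ico, leftLim_nonpos_eq h0 le_rfl, sub_zero]

lemma repB (h0 : ∀ x ≤ (0:ℝ), f x = 0) {β : ℝ} (hβ : β < 0) (u : ℝ) :
    ∫⁻ y in Icc 0 u, ENNReal.ofReal ((u - y) ^ β) ∂f.measure
      = ∫⁻ t in Ioi (0:ℝ),
          (ENNReal.ofReal (leftLim f u) - ENNReal.ofReal (f (u - t ^ β⁻¹))) := by
  have hmf : Measurable fun y : ℝ => (u - y) ^ β :=
    (measurable_rpow_const β).comp (measurable_const.sub measurable_id)
  have hnn : 0 ≤ᵐ[f.measure.restrict (Icc 0 u)] fun y => (u - y) ^ β := by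
    filter_upwards [ae_restrict_mem measurableSet_Icc] with y hy
    exact Real.rpow_nonneg (by linarith [hy.2]) β
  rw [lintegral_eq_lintegral_meas_lt _ hnn hmf.aemeasurable]
  refine setLIntegral_congr_fun measurableSet_Ioi (fun t ht => ?_)
  have ht' : (0:ℝ) < t := ht
  have hs : 0 < t ^ β⁻¹ := Real.rpow_pos_of_pos ht' _
  rw [Measure.restrict_apply (measurableSet_lt measurable_const hmf)]
  rcases le_or_gt u 0 with hu | hu
  · have hempty : {a : ℝ | t < (u - a) ^ β} ∩ Icc 0 u = ∅ := by
      ext y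
      simp only [mem_inter_iff, mem_setOf_eq, mem_Icc, mem_empty_iff_false, iff_false]
      rintro ⟨hty, hy0, hyu⟩
      have hyu' : y = u := le_antisymm hyu (hu.trans hy0)
      rw [hyu', sub_self, Real.zero_rpow hβ.ne] at hty
      linarith
    rw [hempty, measure_empty, leftLim_nonpos_eq h0 hu, ENNReal.ofReal_zero, zero_tsub]
  · rcases le_or_gt (t ^ β⁻¹) u with hsu | hsu
    · have hset : {a : ℝ | t < (u - a) ^ β} ∩ Icc 0 u = Ioo (u - t ^ β⁻¹) u := by
        ext y
        simp only [mem_inter_iff, mem_setOf_eq, mem_Icc, mem_Ioo]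
        constructor
        · rintro ⟨hty, hy0, hyu⟩
          have hylt : y < u := by
            rcases lt_or_eq_of_le hyu with h | h
            · exact h
            · exfalso; rw [h, sub_self, Real.zero_rpow hβ.ne] at hty; linarith
          have h2 : u - y < t ^ β⁻¹ :=
            (Real.lt_rpow_inv_iff_of_neg (by linarith) ht' hβ).mpr hty
          exact ⟨by linarith, hylt⟩
        · rintro ⟨h1, h2⟩
          refine ⟨(Real.lt_rpow_inv_iff_of_neg (by linarith) ht' hβ).mp (by linarith),
            by linarith, h2.le⟩
      rw [hset, f.measure_Ioo, ENNReal.ofReal_sub _ (f_nonneg h0 _)]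
    · have hset : {a : ℝ | t < (u - a) ^ β} ∩ Icc 0 u = Ico 0 u := by
        ext y
        simp only [mem_inter_iff, mem_setOf_eq, mem_Icc, mem_Ico]
        constructor
        · rintro ⟨hty, hy0, hyu⟩
          refine ⟨hy0, ?_⟩
          rcases lt_or_eq_of_le hyu with h | h
          · exact h
          · exfalso; rw [h, sub_self, Real.zero_rpow hβ.ne] at hty; linarith
        · rintro ⟨hy0, hyu⟩
          refine ⟨(Real.lt_rpow_inv_iff_of_neg (by linarith) ht' hβ).mp (by linarith),
            hy0, hyu.le⟩
      rw [hset, f.measure_Ico, leftLim_nonpos_eq h0 le_rfl, sub_zero,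
        h0 (u - t ^ β⁻¹) (by linarith), ENNReal.ofReal_zero, tsub_zero]

lemma rep0 (h0 : ∀ x ≤ (0:ℝ), f x = 0) (u : ℝ) :
    ∫⁻ y in Icc 0 u, ENNReal.ofReal ((u - y) ^ (0:ℝ)) ∂f.measure
      = ENNReal.ofReal (f u) := by
  simp only [Real.rpow_zero, ENNReal.ofReal_one]
  rw [lintegral_one, Measure.restrict_apply_univ]
  rcases le_or_gt 0 u with hu | hu
  · rw [f.measure_Icc, leftLim_nonpos_eq h0 le_rfl, sub_zero]
  · rw [Icc_eq_empty (not_le.mpr hu), measure_empty, h0 u hu.le, ENNReal.ofReal_zero]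

lemma scale_lintegral {g : ℝ → ℝ≥0∞} (hg : Measurable g) {k : ℝ} (hk : 0 < k) :
    ∫⁻ t in Ioi (0:ℝ), g t = ENNReal.ofReal k * ∫⁻ s in Ioi (0:ℝ), g (k * s) := by
  have hmk : Measurable fun x : ℝ => k * x := by fun_prop
  have hpre : (fun x : ℝ => k * x) ⁻¹' Ioi 0 = Ioi 0 := by
    ext x
    simp only [mem_preimage, mem_Ioi]
    exact mul_pos_iff_of_pos_left hk
  have hmap : Measure.map (fun x : ℝ => k * x) (volume.restrict (Ioi 0))
      = ENNReal.ofReal k⁻¹ • volume.restrict (Ioi (0:ℝ)) := by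
    conv_lhs => rw [← hpre]
    rw [← Measure.restrict_map (hmk) measurableSet_Ioi,
      Real.map_volume_mul_left hk.ne', Measure.restrict_smul,
      abs_of_pos (inv_pos.mpr hk)]
  have h1 : ∫⁻ s in Ioi (0:ℝ), g (k * s)
      = ENNReal.ofReal k⁻¹ * ∫⁻ t in Ioi (0:ℝ), g t := by
    rw [← lintegral_map hg (hmk), hmap, lintegral_smul_measure, smul_eq_mul]
  rw [h1, ← mul_assoc, ← ENNReal.ofReal_mul hk.le, mul_inv_cancel₀ hk.ne',
    ENNReal.ofReal_one, one_mul]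

lemma supLeft (f : StieltjesFunction ℝ) {c : ℝ} (hc : 0 < c) (x : ℝ) :
    (⨆ q : ℚ, if (q : ℝ) < x then ENNReal.ofReal (f (c * q)) else 0)
      = ENNReal.ofReal (leftLim f (c * x)) := by
  apply le_antisymm
  · refine iSup_le fun q => ?_
    split_ifs with h
    · exact ENNReal.ofReal_le_ofReal (f.mono.le_leftLim (mul_lt_mul_of_pos_left h hc))
    · exact zero_le
  · have h1 : ∀ n : ℕ, ∃ q : ℚ, x - 1/((n:ℝ)+1) < q ∧ (q:ℝ) < x := by
      intro n
      refine exists_rat_btwn ?_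
      have : (0:ℝ) < 1/((n:ℝ)+1) := by positivity
      linarith
    choose q hq1 hq2 using h1
    have hqt : Tendsto (fun n => (q n : ℝ)) atTop (𝓝 x) := by
      have hlow : Tendsto (fun n : ℕ => x - 1/((n:ℝ)+1)) atTop (𝓝 x) := by
        have h := tendsto_one_div_add_atTop_nhds_zero_nat (𝕜 := ℝ)
        have := tendsto_const_nhds (x := x) (f := atTop (α := ℕ)) |>.sub h
        simpa using this
      exact tendsto_of_tendsto_of_tendsto_of_le_of_le hlow tendsto_const_nhds
        (fun n => (hq1 n).le) fun n => (hq2 n).le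
    have hct : Tendsto (fun n => c * (q n : ℝ)) atTop (𝓝[<] (c * x)) := by
      refine tendsto_nhdsWithin_of_tendsto_nhds_of_eventually_within _
        (tendsto_const_nhds.mul hqt) (Eventually.of_forall fun n => ?_)
      exact mul_lt_mul_of_pos_left (hq2 n) hc
    have hlim : Tendsto (fun n => ENNReal.ofReal (f (c * q n))) atTop
        (𝓝 (ENNReal.ofReal (leftLim f (c * x)))) :=
      (ENNReal.continuous_ofReal.tendsto _).comp ((f.mono.tendsto_leftLim (c * x)).comp hct)
    refine le_of_tendsto hlim (Eventually.of_forall fun n => ?_)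
    exact le_iSup_of_le (q n) (by rw [if_pos (hq2 n)])

lemma infRight (f : StieltjesFunction ℝ) {c : ℝ} (hc : 0 < c) (x : ℝ) :
    (⨅ q : ℚ, if x < (q : ℝ) then ENNReal.ofReal (f (c * q)) else ⊤)
      = ENNReal.ofReal (f (c * x)) := by
  apply le_antisymm
  · have h1 : ∀ n : ℕ, ∃ q : ℚ, x < q ∧ (q:ℝ) < x + 1/((n:ℝ)+1) := by
      intro n
      refine exists_rat_btwn ?_
      have : (0:ℝ) < 1/((n:ℝ)+1) := by positivity
      linarith
    choose q hq1 hq2 using h1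
    have hqt : Tendsto (fun n => (q n : ℝ)) atTop (𝓝 x) := by
      have hhigh : Tendsto (fun n : ℕ => x + 1/((n:ℝ)+1)) atTop (𝓝 x) := by
        have h := tendsto_one_div_add_atTop_nhds_zero_nat (𝕜 := ℝ)
        have := tendsto_const_nhds (x := x) (f := atTop (α := ℕ)) |>.add h
        simpa using this
      exact tendsto_of_tendsto_of_tendsto_of_le_of_le tendsto_const_nhds hhigh
        (fun n => (hq1 n).le) fun n => (hq2 n).le
    have hct : Tendsto (fun n => c * (q n : ℝ)) atTop (𝓝[Ici (c * x)] (c * x)) := by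
      refine tendsto_nhdsWithin_of_tendsto_nhds_of_eventually_within _
        (tendsto_const_nhds.mul hqt) (Eventually.of_forall fun n => ?_)
      exact (mul_lt_mul_of_pos_left (hq1 n) hc).le
    have hlim : Tendsto (fun n => ENNReal.ofReal (f (c * q n))) atTop
        (𝓝 (ENNReal.ofReal (f (c * x)))) :=
      (ENNReal.continuous_ofReal.tendsto _).comp ((f.right_continuous (c * x)).tendsto.comp hct)
    refine ge_of_tendsto hlim (Eventually.of_forall fun n => ?_)
    exact iInf_le_of_le (q n) (by rw [if_pos (hq1 n)])
  · refine le_iInf fun q => ?_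
    split_ifs with h
    · exact ENNReal.ofReal_le_ofReal (f.mono (by nlinarith))
    · exact le_top


end Stmt16Aux

open Stmt16Aux

/-- Self-similarity of the fractionally integrated inverse stable subordinator:
if `W` has nondecreasing right-continuous paths vanishing on `(-∞,0]` and is
self-similar of index `α` (in the sense of finite-dimensional distributions),
then `Y(u) = ∫_{[0,u]}(u-y)^β dW(y)` (with value `+∞` where the integral
diverges) is self-similar of index `α + β`. -/
theorem stmt16 {Ω : Type*} [MeasurableSpace Ω] (P : Measure Ω) [IsProbabilityMeasure P]
    (α β : ℝ) (hα : α ∈ Set.Ioo (0:ℝ) 1)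
    (W : Ω → StieltjesFunction ℝ)
    (hW0 : ∀ ω, ∀ u : ℝ, u ≤ 0 → W ω u = 0)
    (hWmeas : ∀ u : ℝ, Measurable fun ω => W ω u)
    (hWss : ∀ c : ℝ, 0 < c → ∀ n : ℕ, ∀ u : Fin n → ℝ,
      Measure.map (fun ω => fun i => W ω (c * u i)) P =
        Measure.map (fun ω => fun i => c ^ α * W ω (u i)) P)
    (Y : ℝ → Ω → ℝ≥0∞)
    (hY : ∀ u : ℝ, ∀ ω, Y u ω =
      ∫⁻ y in Set.Icc 0 u, ENNReal.ofReal ((u - y) ^ β) ∂(W ω).measure) :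
    ∀ c : ℝ, 0 < c → ∀ n : ℕ, ∀ u : Fin n → ℝ,
      Measure.map (fun ω => fun i => Y (c * u i) ω) P =
        Measure.map (fun ω => fun i => ENNReal.ofReal (c ^ (α + β)) * Y (u i) ω) P := by
  intro c hc n u
  have hcα : (0:ℝ) < c ^ α := Real.rpow_pos_of_pos hc α
  have hcβ : (0:ℝ) < c ^ β := Real.rpow_pos_of_pos hc β
  -- the two path maps into `ℚ → ℝ`
  set m₁ : Ω → (ℚ → ℝ) := fun ω q => W ω (c * (q:ℝ)) with hm₁def
  set m₂ : Ω → (ℚ → ℝ) := fun ω q => c ^ α * W ω (q:ℝ) with hm₂def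
  have hm₁ : Measurable m₁ := measurable_pi_lambda _ fun q => hWmeas _
  have hm₂ : Measurable m₂ := measurable_pi_lambda _ fun q => (hWmeas _).const_mul _
  -- the key identification of laws on path space, from the fdd hypothesis
  have key : Measure.map m₁ P = Measure.map m₂ P := by
    refine ext_of_generate_finite (measurableCylinders fun _ : ℚ => ℝ)
      generateFrom_measurableCylinders.symm isPiSystem_measurableCylinders
      (fun s hs => ?_) ?_
    · obtain ⟨t, S, hS, rfl⟩ := (mem_measurableCylinders s).mp hs
      let e := t.equivFin
      let u' : Fin t.card → ℝ := fun j => ((e.symm j : ℚ) : ℝ)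
      let h : (Fin t.card → ℝ) → ((i : t) → ℝ) := fun x i => x (e i)
      have hh : Measurable h := measurable_pi_lambda _ fun i => measurable_pi_apply _
      have hf1 : Measurable fun ω => fun j : Fin t.card => W ω (c * u' j) :=
        measurable_pi_lambda _ fun j => hWmeas _
      have hf2 : Measurable fun ω => fun j : Fin t.card => c ^ α * W ω (u' j) :=
        measurable_pi_lambda _ fun j => (hWmeas _).const_mul _
      have hpre1 : m₁ ⁻¹' cylinder t S
          = (fun ω => fun j : Fin t.card => W ω (c * u' j)) ⁻¹' (h ⁻¹' S) := by
        ext ω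
        simp only [mem_preimage, mem_cylinder]
        have : t.restrict (m₁ ω) = h fun j => W ω (c * u' j) := by
          funext i
          simp only [Finset.restrict, h, u', m₁, Equiv.symm_apply_apply]
        rw [this]
      have hpre2 : m₂ ⁻¹' cylinder t S
          = (fun ω => fun j : Fin t.card => c ^ α * W ω (u' j)) ⁻¹' (h ⁻¹' S) := by
        ext ω
        simp only [mem_preimage, mem_cylinder]
        have : t.restrict (m₂ ω) = h fun j => c ^ α * W ω (u' j) := by
          funext i
          simp only [Finset.restrict, h, u', m₂, Equiv.symm_apply_apply]
        rw [this]
      rw [Measure.map_apply hm₁ hS.cylinder, Measure.map_apply hm₂ hS.cylinder,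
        hpre1, hpre2, ← Measure.map_apply hf1 (hh hS), ← Measure.map_apply hf2 (hh hS),
        hWss c hc t.card u']
    · rw [Measure.map_apply hm₁ MeasurableSet.univ, Measure.map_apply hm₂ MeasurableSet.univ,
        preimage_univ, preimage_univ]
  rcases lt_trichotomy β 0 with hβ | hβ | hβ
  · -- case β < 0
    have hrep : ∀ x : ℝ, ∀ ω, Y x ω = ∫⁻ t in Ioi (0:ℝ),
        (ENNReal.ofReal (leftLim (W ω) x) - ENNReal.ofReal (W ω (x - t ^ β⁻¹))) := by
      intro x ω
      rw [hY]
      exact repB (hW0 ω) hβ x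
    set Φ : (ℚ → ℝ) → Fin n → ℝ≥0∞ := fun v i =>
      ENNReal.ofReal (c ^ β) * ∫⁻ t in Ioi (0:ℝ),
        ((⨆ q : ℚ, if (q:ℝ) < u i then ENNReal.ofReal (v q) else 0)
          - ⨅ q : ℚ, if u i - t ^ β⁻¹ < (q:ℝ) then ENNReal.ofReal (v q) else ⊤) with hΦdef
    have hΦ : Measurable Φ := by
      refine measurable_pi_lambda _ fun i => Measurable.const_mul ?_ _
      refine Measurable.lintegral_prod_right'
        (f := fun p : (ℚ → ℝ) × ℝ =>
          ((⨆ q : ℚ, if (q:ℝ) < u i then ENNReal.ofReal (p.1 q) else 0)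
            - ⨅ q : ℚ, if u i - p.2 ^ β⁻¹ < (q:ℝ) then ENNReal.ofReal (p.1 q) else ⊤)) ?_
      refine Measurable.sub ?_ ?_
      · refine Measurable.iSup fun q => ?_
        refine Measurable.ite ?_
          (ENNReal.measurable_ofReal.comp ((measurable_pi_apply q).comp measurable_fst))
          measurable_const
        rcases lt_or_ge (q:ℝ) (u i) with h | h
        · simpa [h] using MeasurableSet.univ
        · simpa [not_lt.mpr h] using (MeasurableSet.empty (α := (ℚ → ℝ) × ℝ))
      · refine Measurable.iInf fun q => ?_
        refine Measurable.ite ?_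
          (ENNReal.measurable_ofReal.comp ((measurable_pi_apply q).comp measurable_fst))
          measurable_const
        exact measurableSet_lt
          (measurable_const.sub ((measurable_rpow_const β⁻¹).comp measurable_snd))
          measurable_const
    have h1 : (fun ω => fun i => Y (c * u i) ω) = Φ ∘ m₁ := by
      funext ω
      funext i
      have hg : Measurable fun t : ℝ => ENNReal.ofReal (leftLim (W ω) (c * u i))
          - ENNReal.ofReal (W ω (c * u i - t ^ β⁻¹)) := by
        refine Measurable.fun_sub measurable_const ?_
        exact ENNReal.measurable_ofReal.comp ((W ω).mono.measurable.comp
          (measurable_const.sub (measurable_rpow_const β⁻¹)))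
      show Y (c * u i) ω = Φ (m₁ ω) i
      rw [hrep (c * u i) ω, scale_lintegral hg hcβ]
      simp only [hΦdef, hm₁def]
      congr 1
      refine setLIntegral_congr_fun measurableSet_Ioi (fun s hs => ?_)
      have hs' : (0:ℝ) < s := hs
      have harg : (c ^ β * s) ^ β⁻¹ = c * s ^ β⁻¹ := by
        rw [Real.mul_rpow hcβ.le hs'.le, Real.rpow_rpow_inv hc.le hβ.ne]
      rw [harg, show c * u i - c * s ^ β⁻¹ = c * (u i - s ^ β⁻¹) by ring,
        ← supLeft (W ω) hc (u i), ← infRight (W ω) hc (u i - s ^ β⁻¹)]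
    have h2 : (fun ω => fun i => ENNReal.ofReal (c ^ (α + β)) * Y (u i) ω) = Φ ∘ m₂ := by
      funext ω
      funext i
      show ENNReal.ofReal (c ^ (α + β)) * Y (u i) ω = Φ (m₂ ω) i
      have hk0 : (ENNReal.ofReal (c ^ α)) ≠ 0 := by
        simp only [ne_eq, ENNReal.ofReal_eq_zero, not_le]
        exact hcα
      have hsup : (⨆ q : ℚ, if (q:ℝ) < u i then ENNReal.ofReal (c ^ α * W ω q) else 0)
          = ENNReal.ofReal (c ^ α) * ENNReal.ofReal (leftLim (W ω) (u i)) := by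
        have hbase := supLeft (W ω) one_pos (u i)
        simp only [one_mul] at hbase
        calc (⨆ q : ℚ, if (q:ℝ) < u i then ENNReal.ofReal (c ^ α * W ω q) else 0)
            = ⨆ q : ℚ, ENNReal.ofReal (c ^ α) *
                (if (q:ℝ) < u i then ENNReal.ofReal (W ω q) else 0) := by
              refine iSup_congr fun q => ?_
              split_ifs with h
              · rw [ENNReal.ofReal_mul hcα.le]
              · rw [mul_zero]
          _ = ENNReal.ofReal (c ^ α) *
                ⨆ q : ℚ, (if (q:ℝ) < u i then ENNReal.ofReal (W ω q) else 0) := by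
              rw [ENNReal.mul_iSup]
          _ = _ := by rw [hbase]
      have hinf : ∀ t : ℝ,
          (⨅ q : ℚ, if u i - t ^ β⁻¹ < (q:ℝ) then ENNReal.ofReal (c ^ α * W ω q) else ⊤)
          = ENNReal.ofReal (c ^ α) * ENNReal.ofReal (W ω (u i - t ^ β⁻¹)) := by
        intro t
        have hbase := infRight (W ω) one_pos (u i - t ^ β⁻¹)
        simp only [one_mul] at hbase
        calc (⨅ q : ℚ, if u i - t ^ β⁻¹ < (q:ℝ) then ENNReal.ofReal (c ^ α * W ω q) else ⊤)
            = ⨅ q : ℚ, ENNReal.ofReal (c ^ α) *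
                (if u i - t ^ β⁻¹ < (q:ℝ) then ENNReal.ofReal (W ω q) else ⊤) := by
              refine iInf_congr fun q => ?_
              split_ifs with h
              · rw [ENNReal.ofReal_mul hcα.le]
              · rw [ENNReal.mul_top hk0]
          _ = ENNReal.ofReal (c ^ α) *
                ⨅ q : ℚ, (if u i - t ^ β⁻¹ < (q:ℝ) then ENNReal.ofReal (W ω q) else ⊤) := by
              rw [ENNReal.mul_iInf_of_ne hk0 ENNReal.ofReal_ne_top]
          _ = _ := by rw [hbase]
      simp only [hΦdef, hm₂def]
      have hcongr : ∫⁻ t in Ioi (0:ℝ),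
          ((⨆ q : ℚ, if (q:ℝ) < u i then ENNReal.ofReal (c ^ α * W ω q) else 0)
            - ⨅ q : ℚ, if u i - t ^ β⁻¹ < (q:ℝ) then ENNReal.ofReal (c ^ α * W ω q) else ⊤)
          = ∫⁻ t in Ioi (0:ℝ), ENNReal.ofReal (c ^ α) *
              (ENNReal.ofReal (leftLim (W ω) (u i)) - ENNReal.ofReal (W ω (u i - t ^ β⁻¹))) := by
        refine lintegral_congr fun t => ?_
        rw [hsup, hinf t]
        exact (ENNReal.mul_sub fun _ _ => ENNReal.ofReal_ne_top).symm
      rw [hcongr, lintegral_const_mul' _ _ ENNReal.ofReal_ne_top, ← hrep (u i) ω,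
        ← mul_assoc, ← ENNReal.ofReal_mul hcβ.le, ← Real.rpow_add hc, add_comm β α]
    rw [h1, h2, ← Measure.map_map hΦ hm₁, ← Measure.map_map hΦ hm₂, key]
  · -- case β = 0
    subst hβ
    have hY0 : ∀ x : ℝ, ∀ ω, Y x ω = ENNReal.ofReal (W ω x) := by
      intro x ω
      rw [hY]
      exact rep0 (hW0 ω) x
    set g : (Fin n → ℝ) → Fin n → ℝ≥0∞ := fun x i => ENNReal.ofReal (x i) with hgdef
    have hg : Measurable g :=
      measurable_pi_lambda _ fun i => ENNReal.measurable_ofReal.comp (measurable_pi_apply i)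
    have hf1 : Measurable fun ω => fun i => W ω (c * u i) :=
      measurable_pi_lambda _ fun i => hWmeas _
    have hf2 : Measurable fun ω => fun i => c ^ α * W ω (u i) :=
      measurable_pi_lambda _ fun i => (hWmeas _).const_mul _
    have h1 : (fun ω => fun i => Y (c * u i) ω)
        = g ∘ (fun ω => fun i => W ω (c * u i)) := by
      funext ω
      funext i
      exact hY0 _ ω
    have h2 : (fun ω => fun i => ENNReal.ofReal (c ^ (α + 0)) * Y (u i) ω)
        = g ∘ (fun ω => fun i => c ^ α * W ω (u i)) := by
      funext ω
      funext i
      show ENNReal.ofReal (c ^ (α + 0)) * Y (u i) ω = ENNReal.ofReal (c ^ α * W ω (u i))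
      rw [hY0, add_zero, ENNReal.ofReal_mul hcα.le]
    rw [h1, h2, ← Measure.map_map hg hf1, ← Measure.map_map hg hf2, hWss c hc n u]
  · -- case β > 0
    have hrep : ∀ x : ℝ, ∀ ω, Y x ω = ∫⁻ t in Ioi (0:ℝ),
        ENNReal.ofReal (leftLim (W ω) (x - t ^ β⁻¹)) := by
      intro x ω
      rw [hY]
      exact repA (hW0 ω) hβ x
    set Φ : (ℚ → ℝ) → Fin n → ℝ≥0∞ := fun v i =>
      ENNReal.ofReal (c ^ β) * ∫⁻ t in Ioi (0:ℝ),
        ⨆ q : ℚ, if (q:ℝ) < u i - t ^ β⁻¹ then ENNReal.ofReal (v q) else 0 with hΦdef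
    have hΦ : Measurable Φ := by
      refine measurable_pi_lambda _ fun i => Measurable.const_mul ?_ _
      refine Measurable.lintegral_prod_right'
        (f := fun p : (ℚ → ℝ) × ℝ =>
          ⨆ q : ℚ, if (q:ℝ) < u i - p.2 ^ β⁻¹ then ENNReal.ofReal (p.1 q) else 0) ?_
      refine Measurable.iSup fun q => ?_
      refine Measurable.ite ?_
        (ENNReal.measurable_ofReal.comp ((measurable_pi_apply q).comp measurable_fst))
        measurable_const
      exact measurableSet_lt measurable_const
        (measurable_const.sub ((measurable_rpow_const β⁻¹).comp measurable_snd))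
    have h1 : (fun ω => fun i => Y (c * u i) ω) = Φ ∘ m₁ := by
      funext ω
      funext i
      have hg : Measurable fun t : ℝ => ENNReal.ofReal (leftLim (W ω) (c * u i - t ^ β⁻¹)) :=
        ENNReal.measurable_ofReal.comp ((W ω).mono.leftLim.measurable.comp
          (measurable_const.sub (measurable_rpow_const β⁻¹)))
      show Y (c * u i) ω = Φ (m₁ ω) i
      rw [hrep (c * u i) ω, scale_lintegral hg hcβ]
      simp only [hΦdef, hm₁def]
      congr 1
      refine setLIntegral_congr_fun measurableSet_Ioi (fun s hs => ?_)
      have hs' : (0:ℝ) < s := hs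
      have harg : (c ^ β * s) ^ β⁻¹ = c * s ^ β⁻¹ := by
        rw [Real.mul_rpow hcβ.le hs'.le, Real.rpow_rpow_inv hc.le hβ.ne']
      rw [harg, show c * u i - c * s ^ β⁻¹ = c * (u i - s ^ β⁻¹) by ring,
        ← supLeft (W ω) hc (u i - s ^ β⁻¹)]
    have h2 : (fun ω => fun i => ENNReal.ofReal (c ^ (α + β)) * Y (u i) ω) = Φ ∘ m₂ := by
      funext ω
      funext i
      show ENNReal.ofReal (c ^ (α + β)) * Y (u i) ω = Φ (m₂ ω) i
      simp only [hΦdef, hm₂def]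
      have hcongr : ∫⁻ t in Ioi (0:ℝ),
          (⨆ q : ℚ, if (q:ℝ) < u i - t ^ β⁻¹ then ENNReal.ofReal (c ^ α * W ω q) else 0)
          = ∫⁻ t in Ioi (0:ℝ), ENNReal.ofReal (c ^ α) *
              ENNReal.ofReal (leftLim (W ω) (u i - t ^ β⁻¹)) := by
        refine lintegral_congr fun t => ?_
        have hbase := supLeft (W ω) one_pos (u i - t ^ β⁻¹)
        simp only [one_mul] at hbase
        calc (⨆ q : ℚ, if (q:ℝ) < u i - t ^ β⁻¹ then ENNReal.ofReal (c ^ α * W ω q) else 0)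
            = ⨆ q : ℚ, ENNReal.ofReal (c ^ α) *
                (if (q:ℝ) < u i - t ^ β⁻¹ then ENNReal.ofReal (W ω q) else 0) := by
              refine iSup_congr fun q => ?_
              split_ifs with h
              · rw [ENNReal.ofReal_mul hcα.le]
              · rw [mul_zero]
          _ = ENNReal.ofReal (c ^ α) *
                ⨆ q : ℚ, (if (q:ℝ) < u i - t ^ β⁻¹ then ENNReal.ofReal (W ω q) else 0) := by
              rw [ENNReal.mul_iSup]
          _ = _ := by rw [hbase]
      rw [hcongr, lintegral_const_mul' _ _ ENNReal.ofReal_ne_top, ← hrep (u i) ω,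
        ← mul_assoc, ← ENNReal.ofReal_mul hcβ.le, ← Real.rpow_add hc, add_comm β α]
    rw [h1, h2, ← Measure.map_map hΦ hm₁, ← Measure.map_map hΦ hm₂, key]
end
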